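/- Core exact-remainder identity for the phase-2 sampling component (Section 6.1): let π_P, m_P : 𝒱 → ℝ be measurable with π_P∘V ≠ 0 μ-a.e., let π₀∘V be a version of μ[Δ | σ(V)], and let m₀ : 𝒱 → ℝ be measurable with (π₀∘V)·(m₀∘V) a version of μ[Δ·f | σ(V)] for an integrable f : Ω → ℝ. If all displayed integrands are integrable, then ∫ [ (Δ/π_P(V))·(f − m_P(V)) + m_P(V) ] dμ = ∫ ((π_P − π₀)/π_P)(V)·(m_P − m₀)(V) dμ + ∫ m₀(V) dμ. -/

import Mathlib

open MeasureTheory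

/-- Core exact-remainder identity for the phase-2 sampling component: if `π_P∘V ≠ 0` a.e.,
`π₀∘V` is a version of `μ[Δ | σ(V)]`, and `(π₀∘V)·(m₀∘V)` is a version of `μ[Δ·f | σ(V)]`
for integrable `f`, then
`∫ [(Δ/π_P(V))·(f − m_P(V)) + m_P(V)] dμ
  = ∫ ((π_P − π₀)/π_P)(V)·(m_P − m₀)(V) dμ + ∫ m₀(V) dμ`,
provided all displayed integrands are integrable. -/
theorem exact_remainder_phase2_identity {Ω 𝒱 : Type*}
    {mΩ : MeasurableSpace Ω} [MeasurableSpace 𝒱]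
    (μ : Measure Ω) [IsProbabilityMeasure μ]
    (Δ : Ω → ℝ) (hΔ : Measurable Δ) (hΔ01 : ∀ ω, Δ ω = 0 ∨ Δ ω = 1)
    (V : Ω → 𝒱) (hV : Measurable V)
    (πP π₀ mP m₀ : 𝒱 → ℝ)
    (hπP : Measurable πP) (hπ₀ : Measurable π₀) (hmP : Measurable mP) (hm₀ : Measurable m₀)
    (f : Ω → ℝ) (hf : Integrable f μ)
    (hne : ∀ᵐ ω ∂μ, πP (V ω) ≠ 0)
    (hver : (fun ω => π₀ (V ω)) =ᵐ[μ] μ[Δ | MeasurableSpace.comap V inferInstance])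
    (hreg : (fun ω => π₀ (V ω) * m₀ (V ω))
      =ᵐ[μ] μ[fun ω => Δ ω * f ω | MeasurableSpace.comap V inferInstance])
    (hint1 : Integrable (fun ω => (Δ ω / πP (V ω)) * f ω) μ)
    (hint2 : Integrable (fun ω => (Δ ω / πP (V ω)) * mP (V ω)) μ)
    (hint3 : Integrable (fun ω => mP (V ω)) μ)
    (hint4 : Integrable (fun ω => m₀ (V ω)) μ)
    (hint5 : Integrable
      (fun ω => ((πP (V ω) - π₀ (V ω)) / πP (V ω)) * (mP (V ω) - m₀ (V ω))) μ) :
    ∫ ω, ((Δ ω / πP (V ω)) * (f ω - mP (V ω)) + mP (V ω)) ∂μ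
      = ∫ ω, ((πP (V ω) - π₀ (V ω)) / πP (V ω)) * (mP (V ω) - m₀ (V ω)) ∂μ
        + ∫ ω, m₀ (V ω) ∂μ := by
  let m : MeasurableSpace Ω := MeasurableSpace.comap V inferInstance
  have hm : m ≤ mΩ := hV.comap_le
  have hVm : Measurable[m] V := Measurable.of_comap_le le_rfl
  have hΔbd : ∀ ω, ‖Δ ω‖ ≤ 1 := by
    intro ω; rcases hΔ01 ω with h | h <;> simp [h]
  have hΔint : Integrable Δ μ :=
    (integrable_const (1 : ℝ)).mono' hΔ.aestronglyMeasurable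
      (Filter.Eventually.of_forall hΔbd)
  have hΔf : Integrable (fun ω => Δ ω * f ω) μ :=
    hf.bdd_mul hΔ.aestronglyMeasurable (Filter.Eventually.of_forall hΔbd)
  -- key pull-out lemma
  have key : ∀ (g : 𝒱 → ℝ), Measurable g → ∀ (X : Ω → ℝ), Integrable X μ →
      Integrable (fun ω => g (V ω) * X ω) μ →
      ∫ ω, g (V ω) * X ω ∂μ = ∫ ω, g (V ω) * (μ[X|m]) ω ∂μ := by
    intro g hg X hX hgX
    have hsm : StronglyMeasurable[m] (fun ω => g (V ω)) :=
      (hg.comp hVm).stronglyMeasurable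
    have hpull : μ[(fun ω => g (V ω)) * X|m] =ᵐ[μ] (fun ω => g (V ω)) * μ[X|m] :=
      condExp_mul_of_stronglyMeasurable_left hsm hgX hX
    calc ∫ ω, g (V ω) * X ω ∂μ
        = ∫ ω, ((fun ω => g (V ω)) * X) ω ∂μ := rfl
      _ = ∫ ω, (μ[(fun ω => g (V ω)) * X|m]) ω ∂μ := (integral_condExp hm).symm
      _ = ∫ ω, ((fun ω => g (V ω)) * μ[X|m]) ω ∂μ := integral_congr_ae hpull
      _ = ∫ ω, g (V ω) * (μ[X|m]) ω ∂μ := rfl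
  -- first piece: ∫ Δ/πP(V) * f = ∫ (1/πP(V)) * π₀(V) m₀(V)
  have h1 : ∫ ω, (Δ ω / πP (V ω)) * f ω ∂μ
      = ∫ ω, (1 / πP (V ω)) * (π₀ (V ω) * m₀ (V ω)) ∂μ := by
    have heq : (fun ω => (Δ ω / πP (V ω)) * f ω)
        = fun ω => (1 / πP (V ω)) * (Δ ω * f ω) := by
      funext ω; ring
    have hgm : Measurable (fun v => 1 / πP v) := hπP.const_div 1
    rw [heq]
    rw [key (fun v => 1 / πP v) hgm (fun ω => Δ ω * f ω) hΔf (heq ▸ hint1)]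
    refine integral_congr_ae ?_
    filter_upwards [hreg] with ω hω
    exact congrArg _ hω.symm
  -- second piece: ∫ Δ/πP(V) * mP(V) = ∫ (mP/πP)(V) * π₀(V)
  have h2 : ∫ ω, (Δ ω / πP (V ω)) * mP (V ω) ∂μ
      = ∫ ω, (mP (V ω) / πP (V ω)) * π₀ (V ω) ∂μ := by
    have heq : (fun ω => (Δ ω / πP (V ω)) * mP (V ω))
        = fun ω => (mP (V ω) / πP (V ω)) * Δ ω := by
      funext ω; ring
    have hgm : Measurable (fun v => mP v / πP v) := hmP.div hπP
    rw [heq]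
    rw [key (fun v => mP v / πP v) hgm Δ hΔint (heq ▸ hint2)]
    refine integral_congr_ae ?_
    filter_upwards [hver] with ω hω
    exact congrArg _ hω.symm
  -- integrability of the new integrands
  have hi1 : Integrable (fun ω => (1 / πP (V ω)) * (π₀ (V ω) * m₀ (V ω))) μ := by
    have h : Integrable ((fun ω => 1 / πP (V ω)) * μ[fun ω => Δ ω * f ω|m]) μ := by
      refine (integrable_condExp (f := (fun ω => 1 / πP (V ω)) * fun ω => Δ ω * f ω)
        (m := m)).congr
        (condExp_mul_of_stronglyMeasurable_left ((hπP.const_div 1).comp hVm).stronglyMeasurable ?_ hΔf)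
      have heq : (fun ω => (Δ ω / πP (V ω)) * f ω)
          = (fun ω => 1 / πP (V ω)) * fun ω => Δ ω * f ω := by
        funext ω; simp; ring
      exact heq ▸ hint1
    refine h.congr ?_
    filter_upwards [hreg] with ω hω
    simp only [Pi.mul_apply]
    exact congrArg _ hω.symm
  have hi2 : Integrable (fun ω => (mP (V ω) / πP (V ω)) * π₀ (V ω)) μ := by
    have : Integrable ((fun ω => mP (V ω) / πP (V ω)) * μ[Δ|m]) μ := by
      refine (integrable_condExp (f := (fun ω => mP (V ω) / πP (V ω)) * Δ) (m := m)).congr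
        (condExp_mul_of_stronglyMeasurable_left ((hmP.div hπP).comp hVm).stronglyMeasurable ?_ hΔint)
      have heq : (fun ω => (Δ ω / πP (V ω)) * mP (V ω))
          = (fun ω => mP (V ω) / πP (V ω)) * Δ := by
        funext ω; simp; ring
      exact heq ▸ hint2
    refine this.congr ?_
    filter_upwards [hver] with ω hω
    simp only [Pi.mul_apply]
    exact congrArg _ hω.symm
  -- rewrite LHS
  have hlhs : ∫ ω, ((Δ ω / πP (V ω)) * (f ω - mP (V ω)) + mP (V ω)) ∂μ
      = ∫ ω, (Δ ω / πP (V ω)) * f ω ∂μ - ∫ ω, (Δ ω / πP (V ω)) * mP (V ω) ∂μ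
        + ∫ ω, mP (V ω) ∂μ := by
    have heq : (fun ω => (Δ ω / πP (V ω)) * (f ω - mP (V ω)) + mP (V ω))
        = fun ω => ((Δ ω / πP (V ω)) * f ω - (Δ ω / πP (V ω)) * mP (V ω)) + mP (V ω) := by
      funext ω; ring
    have hsub : Integrable
        (fun ω => (Δ ω / πP (V ω)) * f ω - (Δ ω / πP (V ω)) * mP (V ω)) μ :=
      hint1.sub hint2
    rw [heq, integral_add hsub hint3, integral_sub hint1 hint2]
  have hmid : ∫ ω, ((1 / πP (V ω)) * (π₀ (V ω) * m₀ (V ω))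
        - (mP (V ω) / πP (V ω)) * π₀ (V ω) + mP (V ω)) ∂μ
      = ∫ ω, (1 / πP (V ω)) * (π₀ (V ω) * m₀ (V ω)) ∂μ
        - ∫ ω, (mP (V ω) / πP (V ω)) * π₀ (V ω) ∂μ + ∫ ω, mP (V ω) ∂μ := by
    have hsub : Integrable
        (fun ω => (1 / πP (V ω)) * (π₀ (V ω) * m₀ (V ω))
          - (mP (V ω) / πP (V ω)) * π₀ (V ω)) μ := hi1.sub hi2
    rw [integral_add hsub hint3, integral_sub hi1 hi2]
  have hrhs : ∫ ω, (((πP (V ω) - π₀ (V ω)) / πP (V ω)) * (mP (V ω) - m₀ (V ω))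
        + m₀ (V ω)) ∂μ
      = ∫ ω, ((πP (V ω) - π₀ (V ω)) / πP (V ω)) * (mP (V ω) - m₀ (V ω)) ∂μ
        + ∫ ω, m₀ (V ω) ∂μ := integral_add hint5 hint4
  rw [hlhs, h1, h2, ← hmid, ← hrhs]
  refine integral_congr_ae ?_
  filter_upwards [hne] with ω hω
  field_simp
  ring
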